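/- Let a, b, c, n be integers with a ≠ 0 and n ≥ 2, let q(x) = a·x² + b·x + c and d = b² − 4·a·c. The congruence q(x) ≡ 0 (mod n) has no integer solution if and only if either (a) d is not a quadratic residue of 4·a·n, or (b) d is a quadratic residue of 4·a·n and there exists a prime factor p of 2·a such that, with α = μ_p(4·a·n) and β = μ_p(2·a): 1 < β < α, p divides b, p² divides d, and (p^α, p^β) forms a (b, d)-obstruction. -/
import Mathlib


/-- An integer `u` is a quadratic residue of the nonzero integer `v`. -/
def IsQR (v u : ℤ) : Prop := ∃ x : ℤ, v ∣ x ^ 2 - u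

/-- `(p^α, p^β)` forms a `(b, d)`-obstruction (paper's Definition 3.4):
either condition (iii) or condition (iv) of Proposition 3.3 holds. -/
def Obstruction (p α β : ℕ) (b d : ℤ) : Prop :=
  (¬ (p : ℤ) ^ α ∣ d ∧
    ∃ μ : ℕ, padicValInt p d = 2 * μ ∧
      ∀ σ : ℤ, 0 ≤ σ → σ < (p : ℤ) ^ (α - 2 * μ) →
        (p : ℤ) ^ (α - 2 * μ) ∣ σ ^ 2 - d / (p : ℤ) ^ (2 * μ) →
        ∀ i : ℕ, i < p ^ μ →
          ¬ (p : ℤ) ^ β ∣ σ * (p : ℤ) ^ μ + (i : ℤ) * (p : ℤ) ^ (α - μ) - b) ∨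
  ((p : ℤ) ^ α ∣ d ∧
    ∃ s : ℕ, (α = 2 * s ∨ α = 2 * s - 1) ∧
      ∀ i : ℕ, i < p ^ (α - s) → ¬ (p : ℤ) ^ β ∣ (i : ℤ) * (p : ℤ) ^ s - b)

section helpers
variable {p : ℕ} [hp : Fact p.Prime]

lemma myval_le_of_dvd {t : ℕ} {z : ℤ} (hz : z ≠ 0) (h : (p:ℤ)^t ∣ z) :
    t ≤ padicValInt p z := by
  rcases (padicValInt_dvd_iff t z).mp h with h' | h'
  · exact absurd h' hz
  · exact h'

lemma mynot_pow_succ_dvd {z : ℤ} (hz : z ≠ 0) :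
    ¬ (p:ℤ)^(padicValInt p z + 1) ∣ z := fun h => by
  have := myval_le_of_dvd hz h; omega

lemma myval_sq {y : ℤ} (hy : y ≠ 0) : padicValInt p (y^2) = 2 * padicValInt p y := by
  rw [sq, padicValInt.mul hy hy]; ring

lemma myval_eq_of_pow_dvd_sub {t : ℕ} {u v : ℤ} (hv : v ≠ 0) (hvt : padicValInt p v < t)
    (h : (p:ℤ)^t ∣ u - v) : u ≠ 0 ∧ padicValInt p u = padicValInt p v := by
  have hu : u ≠ 0 := by
    rintro rfl
    have : (p:ℤ)^t ∣ v := (dvd_neg).mp (by simpa using h)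
    exact absurd (myval_le_of_dvd hv this) (by omega)
  refine ⟨hu, le_antisymm ?_ ?_⟩
  · by_contra hlt
    push_neg at hlt
    have h1 : (p:ℤ)^(padicValInt p v + 1) ∣ u := by
      calc (p:ℤ)^(padicValInt p v + 1) ∣ (p:ℤ)^(padicValInt p u) :=
            pow_dvd_pow _ (by omega)
        _ ∣ u := padicValInt_dvd u
    have h2 : (p:ℤ)^(padicValInt p v + 1) ∣ v := by
      have := dvd_sub h1 ((pow_dvd_pow (p:ℤ) (by omega : padicValInt p v + 1 ≤ t)).trans h)
      simpa using this
    exact mynot_pow_succ_dvd hv h2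
  · have h1 : (p:ℤ)^(padicValInt p v) ∣ u := by
      have := dvd_add ((pow_dvd_pow (p:ℤ) (by omega : padicValInt p v ≤ t)).trans h)
        (padicValInt_dvd v)
      simpa using this
    exact myval_le_of_dvd hu h1

lemma myppos : (0:ℤ) < (p:ℕ) := by exact_mod_cast hp.out.pos

lemma myresidue' (z : ℤ) (m : ℕ) :
    ∃ σ : ℤ, 0 ≤ σ ∧ σ < (p:ℤ)^m ∧ (p:ℤ)^m ∣ σ - z := by
  have hpos : (0:ℤ) < (p:ℤ)^m := pow_pos myppos m
  refine ⟨z % (p:ℤ)^m, Int.emod_nonneg _ (ne_of_gt hpos), Int.emod_lt_of_pos _ hpos, ?_⟩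
  rw [Int.emod_def]
  exact ⟨-(z / (p:ℤ)^m), by ring⟩

lemma myresidue (w : ℤ) (m : ℕ) :
    ∃ i : ℕ, i < p^m ∧ (p:ℤ)^m ∣ (i:ℤ) - w := by
  obtain ⟨σ, h0, hlt, hd⟩ := myresidue' (p := p) w m
  refine ⟨σ.toNat, ?_, ?_⟩
  · have : ((σ.toNat : ℤ)) < ((p^m : ℕ) : ℤ) := by
      rw [Int.toNat_of_nonneg h0]; push_cast; exact hlt
    exact_mod_cast this
  · rwa [Int.toNat_of_nonneg h0]

/-- Forward direction: a root `y` of `y² ≡ d` with `y ≡ b mod p^β` kills any obstruction. -/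
lemma no_obstruction_of_root {α β : ℕ} {b d y : ℤ} (hβα : β ≤ α)
    (h1 : (p:ℤ)^α ∣ y^2 - d) (h2 : (p:ℤ)^β ∣ y - b) :
    ¬ Obstruction p α β b d := by
  rintro (⟨hnd, μ, hval, hall⟩ | ⟨hd, s, hs, hall⟩)
  · -- case (iii)
    have hd0 : d ≠ 0 := by rintro rfl; exact hnd (dvd_zero _)
    have hdα : padicValInt p d < α := by
      by_contra hle
      exact hnd ((padicValInt_dvd_iff α d).mpr (Or.inr (by omega)))
    obtain ⟨hy20, hvy2⟩ := myval_eq_of_pow_dvd_sub (p := p) hd0 hdα h1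
    have hy0 : y ≠ 0 := by rintro rfl; simp at hy20
    have hμ : padicValInt p y = μ := by
      have := myval_sq (p := p) hy0
      omega
    have h2μα : 2 * μ < α := by omega
    -- write y = p^μ * z
    obtain ⟨z, hz⟩ : (p:ℤ)^μ ∣ y := by
      rw [← hμ]; exact padicValInt_dvd y
    set m := α - 2*μ with hm
    have hαeq : α = 2*μ + m := by omega
    -- d = p^(2μ) * d₁
    have hd1dvd : (p:ℤ)^(2*μ) ∣ d := by rw [← hval]; exact padicValInt_dvd d
    set d₁ := d / (p:ℤ)^(2*μ) with hd₁
    have hdeq : d = (p:ℤ)^(2*μ) * d₁ := (Int.mul_ediv_cancel' hd1dvd).symm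
    -- p^m ∣ z² - d₁
    have hzd : (p:ℤ)^m ∣ z^2 - d₁ := by
      have hne : ((p:ℤ)^(2*μ)) ≠ 0 := pow_ne_zero _ (ne_of_gt (myppos (p := p)))
      have e : y^2 - d = (p:ℤ)^(2*μ) * (z^2 - d₁) := by rw [hz, hdeq]; ring
      rw [e, hαeq, pow_add] at h1
      exact (mul_dvd_mul_iff_left hne).mp h1
    -- choose σ and k with z = σ + p^m * k
    obtain ⟨σ, hσ0, hσlt, hσz⟩ := myresidue' (p := p) z m
    obtain ⟨k, hk⟩ := hσz
    have hzeq : z = σ - (p:ℤ)^m * k := by linarith [hk]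
    -- σ² ≡ d₁ mod p^m
    have hσsq : (p:ℤ)^m ∣ σ^2 - d₁ := by
      have h5 : (p:ℤ)^m ∣ σ^2 - z^2 := ⟨k*(σ+z), by rw [hzeq]; ring⟩
      have := dvd_add h5 hzd
      simpa using this
    -- choose i
    obtain ⟨i, hilt, hik⟩ := myresidue (p := p) (-k) μ
    refine hall σ hσ0 hσlt hσsq i hilt ?_
    -- p^β ∣ σ p^μ + i p^(α-μ) - b
    have hαμ : α - μ = μ + m := by omega
    have e2 : σ * (p:ℤ)^μ + (i:ℤ) * (p:ℤ)^(α-μ) - b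
        = (y - b) + ((i:ℤ) + k) * (p:ℤ)^(α-μ) := by
      rw [hz, hzeq, hαμ]; ring
    rw [e2]
    refine dvd_add h2 ?_
    obtain ⟨t, ht⟩ := hik
    have ht' : (i:ℤ) + k = (p:ℤ)^μ * t := by linarith [ht]
    have e3 : ((i:ℤ) + k) * (p:ℤ)^(α-μ) = (p:ℤ)^α * t := by
      rw [ht', hαμ, hαeq]; ring
    rw [e3]
    exact (pow_dvd_pow _ hβα).trans (dvd_mul_right _ _)
  · -- case (iv)
    have hy2 : (p:ℤ)^α ∣ y^2 := by
      have := dvd_add h1 hd; simpa using this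
    by_cases hy0 : y = 0
    · subst hy0
      exact hall 0 (pow_pos hp.out.pos _) (by simpa using h2)
    · have hvy : s ≤ padicValInt p y := by
        have h3 := myval_le_of_dvd (p := p) (pow_ne_zero 2 hy0) hy2
        have h4 := myval_sq (p := p) hy0
        omega
      obtain ⟨w, hw⟩ : (p:ℤ)^s ∣ y := (pow_dvd_pow _ hvy).trans (padicValInt_dvd y)
      obtain ⟨i, hilt, hiw⟩ := myresidue (p := p) w (α - s)
      refine hall i hilt ?_
      obtain ⟨t, ht⟩ := hiw
      have e2 : (i:ℤ) * (p:ℤ)^s - b = (y - b) + ((p:ℤ)^(α-s) * (p:ℤ)^s) * t := by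
        rw [hw]
        have hieq : (i:ℤ) = w + (p:ℤ)^(α-s)*t := by linarith [ht]
        rw [hieq]; ring
      rw [e2, ← pow_add, (by omega : α - s + s = α)]
      exact dvd_add h2 ((pow_dvd_pow _ hβα).trans (dvd_mul_right _ _))

/-- Backward direction, local step at a prime dividing `2a`. -/
lemma local_lift {p : ℕ} [hp : Fact p.Prime] (a b c n : ℤ) (ha : a ≠ 0) (hn : 2 ≤ n)
    (hpa : (p:ℤ) ∣ 2*a)
    (hy : ∃ y : ℤ, (p:ℤ)^(padicValInt p (4*a*n)) ∣ y^2 - (b^2-4*a*c))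
    (hno : ¬ (1 < padicValInt p (2*a) ∧
       padicValInt p (2*a) < padicValInt p (4*a*n) ∧
       (p:ℤ) ∣ b ∧ (p:ℤ)^2 ∣ (b^2-4*a*c) ∧
       Obstruction p (padicValInt p (4*a*n)) (padicValInt p (2*a)) b (b^2-4*a*c))) :
    ∃ y : ℤ, (p:ℤ)^(padicValInt p (4*a*n)) ∣ y^2 - (b^2-4*a*c) ∧
      (p:ℤ)^(padicValInt p (2*a)) ∣ y - b := by
  set d := b^2 - 4*a*c with hd
  set α := padicValInt p (4*a*n) with hα
  set β := padicValInt p (2*a) with hβ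
  have ha2 : (2*a : ℤ) ≠ 0 := by simp [ha]
  have hn2 : (2*n : ℤ) ≠ 0 := by intro h; omega
  have hβ1 : 1 ≤ β := myval_le_of_dvd ha2 (by simpa using hpa)
  have hβα : β ≤ α := by
    have h4 : (4*a*n : ℤ) = (2*a) * (2*n) := by ring
    have := padicValInt.mul (p := p) ha2 hn2
    rw [hα, h4, this]
    omega
  have hβ2a : (p:ℤ)^β ∣ 2*a := padicValInt_dvd _
  have hβ4ac : (p:ℤ)^β ∣ 4*a*c := hβ2a.trans ⟨2*c, by ring⟩
  obtain ⟨y, hy⟩ := hy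
  by_cases hβαeq : β = α
  · -- y' = b works since p^α ∣ 4ac
    refine ⟨b, ?_, by simp⟩
    have : (p:ℤ)^α ∣ 4*a*c := hβαeq ▸ hβ4ac
    have e : b^2 - d = 4*a*c := by rw [hd]; ring
    rw [e]; exact this
  have hβαlt : β < α := by omega
  -- p^β ∣ y² - b²
  have hyd : (p:ℤ)^β ∣ y^2 - d := (pow_dvd_pow _ hβα).trans hy
  have hyb2 : (p:ℤ)^β ∣ y^2 - b^2 := by
    have := dvd_sub hyd hβ4ac
    have e : y^2 - d - 4*a*c = y^2 - b^2 := by rw [hd]; ring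
    rwa [e] at this
  by_cases hβone : β = 1
  · -- p ∣ (y-b)(y+b)
    have hprime : Prime (p:ℤ) := Nat.prime_iff_prime_int.mp hp.out
    have : (p:ℤ) ∣ (y-b)*(y+b) := by
      have e : (y-b)*(y+b) = y^2 - b^2 := by ring
      rw [e]
      have := (pow_dvd_pow (p:ℤ) (by omega : 1 ≤ β)).trans hyb2
      simpa using this
    rcases hprime.dvd_mul.mp this with h | h
    · refine ⟨y, hy, ?_⟩
      rw [hβone, pow_one]; exact h
    · refine ⟨-y, by simpa using hy, ?_⟩
      rw [hβone, pow_one]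
      have : (p:ℤ) ∣ -(y+b) := dvd_neg.mpr h
      have e : -(y+b) = -y - b := by ring
      rwa [e] at this
  have hβ2 : 2 ≤ β := by omega
  by_cases hpb : (p:ℤ) ∣ b
  · -- hard case: use ¬Obstruction
    have hp2d : (p:ℤ)^2 ∣ d := by
      have h1 : (p:ℤ)^2 ∣ b^2 := pow_dvd_pow_of_dvd hpb 2
      have h2 : (p:ℤ)^2 ∣ 4*a*c := (pow_dvd_pow (p:ℤ) hβ2).trans hβ4ac
      have := dvd_sub h1 h2
      rwa [hd]
    have hnob : ¬ Obstruction p α β b d := fun h =>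
      hno ⟨by omega, hβαlt, hpb, hp2d, h⟩
    rw [Obstruction, not_or] at hnob
    obtain ⟨h3, h4⟩ := hnob
    by_cases hda : (p:ℤ)^α ∣ d
    · -- use ¬(iv)
      push_neg at h4
      set s : ℕ := (α+1)/2 with hs
      obtain ⟨i, hilt, hidvd⟩ := h4 hda s (by omega)
      refine ⟨(i:ℤ) * (p:ℤ)^s, ?_, ?_⟩
      · have h2s : α ≤ 2*s := by omega
        have h5 : (p:ℤ)^α ∣ ((i:ℤ)*(p:ℤ)^s)^2 := by
          have e : ((i:ℤ)*(p:ℤ)^s)^2 = (p:ℤ)^(2*s) * (i:ℤ)^2 := by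
            rw [mul_pow, ← pow_mul]; ring
          rw [e]
          exact ((pow_dvd_pow (p:ℤ) h2s).trans (dvd_mul_right _ _))
        exact dvd_sub h5 hda
      · exact hidvd
    · -- use ¬(iii)
      push_neg at h3
      have hd0 : d ≠ 0 := by intro h0; exact hda (by rw [h0]; exact dvd_zero _)
      have hdα : padicValInt p d < α := by
        by_contra hle
        exact hda ((padicValInt_dvd_iff α d).mpr (Or.inr (by omega)))
      have hy0 : y ≠ 0 := by
        intro h0
        rw [h0] at hy
        refine hda ?_
        have : (p:ℤ)^α ∣ -((0:ℤ)^2 - d) := dvd_neg.mpr hy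
        simpa using this
      obtain ⟨hy20, hvy2⟩ := myval_eq_of_pow_dvd_sub (p := p) hd0 hdα hy
      have hvsq := myval_sq (p := p) hy0
      set μ := padicValInt p y with hμ
      have hval : padicValInt p d = 2*μ := by omega
      obtain ⟨σ, hσ0, hσlt, hσsq, i, hilt, hidvd⟩ := h3 hda μ hval
      have h2μα : 2*μ < α := by omega
      set m : ℕ := α - 2*μ with hm
      have hαeq : α = 2*μ + m := by omega
      have hαμ : α - μ = μ + m := by omega
      -- d = p^(2μ) d₁, p^m ∣ σ² - d₁
      have hd1dvd : (p:ℤ)^(2*μ) ∣ d := by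
        have := padicValInt_dvd (p := p) d
        rwa [hval] at this
      set d₁ := d / (p:ℤ)^(2*μ) with hd₁
      have hdeq : d = (p:ℤ)^(2*μ) * d₁ := (Int.mul_ediv_cancel' hd1dvd).symm
      refine ⟨σ * (p:ℤ)^μ + (i:ℤ) * (p:ℤ)^(α-μ), ?_, hidvd⟩
      obtain ⟨k, hk⟩ := hσsq
      refine ⟨k + 2*σ*(i:ℤ) + (i:ℤ)^2*(p:ℤ)^m, ?_⟩
      rw [hαμ, hdeq, hαeq]
      have hk' : σ^2 = d₁ + (p:ℤ)^m * k := by linarith [hk]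
      calc (σ * (p:ℤ)^μ + (i:ℤ) * (p:ℤ)^(μ+m))^2 - (p:ℤ)^(2*μ) * d₁
          = (p:ℤ)^(2*μ) * (σ^2 - d₁) + (p:ℤ)^(2*μ+m) * (2*σ*(i:ℤ) + (i:ℤ)^2*(p:ℤ)^m) := by
            ring
        _ = (p:ℤ)^(2*μ+m) * (k + 2*σ*(i:ℤ) + (i:ℤ)^2*(p:ℤ)^m) := by rw [hk]; ring
  · -- p ∤ b : y or -y works
    by_cases hp2 : p = 2
    · -- p = 2
      have hp2' : ((p:ℕ):ℤ) = 2 := by rw [hp2]; norm_num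
      have hprime : Prime (p:ℤ) := Nat.prime_iff_prime_int.mp hp.out
      have hy2b1 : (p:ℤ)^(β+1) ∣ y^2 - b^2 := by
        have t1 : (p:ℤ)^(β+1) ∣ y^2 - d := (pow_dvd_pow _ (by omega)).trans hy
        have t2 : (p:ℤ)^(β+1) ∣ 4*a*c := by
          have t3 : (p:ℤ)^(β+1) ∣ (2*a)*(p:ℤ) := by
            rw [pow_succ]; exact mul_dvd_mul hβ2a dvd_rfl
          refine t3.trans ?_
          rw [hp2']; exact ⟨c, by ring⟩
        have t4 := dvd_sub t1 t2
        have e : y^2 - d - 4*a*c = y^2 - b^2 := by rw [hd]; ring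
        rwa [e] at t4
      have h2yb : (2:ℤ) ∣ (y-b)*(y+b) := by
        have t1 : (p:ℤ) ∣ y^2 - b^2 :=
          (dvd_pow_self (p:ℤ) (Nat.succ_ne_zero β)).trans hy2b1
        rw [hp2'] at t1
        have e : (y-b)*(y+b) = y^2 - b^2 := by ring
        rw [e]; exact t1
      have heven : (2:ℤ) ∣ y - b ∧ (2:ℤ) ∣ y + b := by
        rcases Int.prime_two.dvd_mul.mp h2yb with h | h
        · exact ⟨h, by have := dvd_add h ⟨b, rfl⟩; have e : y - b + 2*b = y+b := by ring
                       rwa [e] at this⟩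
        · refine ⟨?_, h⟩
          have := dvd_sub h ⟨b, rfl⟩
          have e : y + b - 2*b = y - b := by ring
          rwa [e] at this
      have hn4 : ¬ (4:ℤ) ∣ y - b ∨ ¬ (4:ℤ) ∣ y + b := by
        by_contra hcon
        push_neg at hcon
        obtain ⟨f1, f2⟩ := hcon
        have h4 : (4:ℤ) ∣ 2*b := by
          have := dvd_sub f2 f1
          have e : y + b - (y - b) = 2*b := by ring
          rwa [e] at this
        obtain ⟨t, ht⟩ := h4
        refine hpb ?_
        rw [hp2']
        exact ⟨t, by linarith⟩
      rcases hn4 with h4 | h4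
      · -- ¬4 ∣ y - b : take -y, showing p^β ∣ y + b
        obtain ⟨w, hw⟩ := heven.1
        have hwodd : ¬ (2:ℤ) ∣ w := by
          rintro ⟨t, ht⟩
          exact h4 ⟨t, by rw [hw, ht]; ring⟩
        have hcopw : IsCoprime ((p:ℤ)^β) w :=
          (hprime.coprime_iff_not_dvd.mpr (by rw [hp2']; exact hwodd)).pow_left
        have hstep : (p:ℤ)^β * 2 ∣ ((y+b)*w)*2 := by
          have e : ((y+b)*w)*2 = y^2 - b^2 := by
            have : (2:ℤ)*w = y - b := hw.symm
            calc ((y+b)*w)*2 = (y+b)*(2*w) := by ring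
              _ = (y+b)*(y-b) := by rw [this]
              _ = y^2 - b^2 := by ring
          rw [e, ← hp2', ← pow_succ]
          exact hy2b1
        have h2β : (p:ℤ)^β ∣ (y+b)*w :=
          (mul_dvd_mul_iff_right (two_ne_zero)).mp hstep
        have hfin : (p:ℤ)^β ∣ y + b := hcopw.dvd_of_dvd_mul_right h2β
        refine ⟨-y, by simpa using hy, ?_⟩
        have h6 : (p:ℤ)^β ∣ -(y+b) := dvd_neg.mpr hfin
        have e : -(y+b) = -y - b := by ring
        rwa [e] at h6
      · -- ¬4 ∣ y + b : take y
        obtain ⟨w, hw⟩ := heven.2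
        have hwodd : ¬ (2:ℤ) ∣ w := by
          rintro ⟨t, ht⟩
          exact h4 ⟨t, by rw [hw, ht]; ring⟩
        have hcopw : IsCoprime ((p:ℤ)^β) w :=
          (hprime.coprime_iff_not_dvd.mpr (by rw [hp2']; exact hwodd)).pow_left
        have hstep : (p:ℤ)^β * 2 ∣ ((y-b)*w)*2 := by
          have e : ((y-b)*w)*2 = y^2 - b^2 := by
            have : (2:ℤ)*w = y + b := hw.symm
            calc ((y-b)*w)*2 = (y-b)*(2*w) := by ring
              _ = (y-b)*(y+b) := by rw [this]
              _ = y^2 - b^2 := by ring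
          rw [e, ← hp2', ← pow_succ]
          exact hy2b1
        have h2β : (p:ℤ)^β ∣ (y-b)*w :=
          (mul_dvd_mul_iff_right (two_ne_zero)).mp hstep
        exact ⟨y, hy, hcopw.dvd_of_dvd_mul_right h2β⟩
    · -- p odd
      have hprime : Prime (p:ℤ) := Nat.prime_iff_prime_int.mp hp.out
      have hnboth : ¬ ((p:ℤ) ∣ y - b ∧ (p:ℤ) ∣ y + b) := by
        rintro ⟨hm1, hm2⟩
        have : (p:ℤ) ∣ 2*b := by
          have := dvd_sub hm2 hm1
          have e : y + b - (y - b) = 2*b := by ring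
          rwa [e] at this
        rcases hprime.dvd_mul.mp this with h | h
        · have h7 : p ∣ 2 := by exact_mod_cast h
          exact hp2 ((Nat.prime_dvd_prime_iff_eq hp.out Nat.prime_two).mp h7)
        · exact hpb h
      have hprod : (p:ℤ)^β ∣ (y-b)*(y+b) := by
        have e : (y-b)*(y+b) = y^2 - b^2 := by ring
        rw [e]; exact hyb2
      rw [not_and_or] at hnboth
      rcases hnboth with h | h
      · -- p ∤ y - b, so p^β ∣ y + b, take -y
        have hcop : IsCoprime ((p:ℤ)^β) (y-b) :=
          (hprime.coprime_iff_not_dvd.mpr h).pow_left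
        have : (p:ℤ)^β ∣ y + b := hcop.dvd_of_dvd_mul_left hprod
        refine ⟨-y, by simpa using hy, ?_⟩
        have h6 : (p:ℤ)^β ∣ -(y+b) := dvd_neg.mpr this
        have e : -(y+b) = -y - b := by ring
        rwa [e] at h6
      · have hcop : IsCoprime ((p:ℤ)^β) (y+b) :=
          (hprime.coprime_iff_not_dvd.mpr h).pow_left
        have : (p:ℤ)^β ∣ y - b := hcop.dvd_of_dvd_mul_right hprod
        exact ⟨y, hy, this⟩

/-- Combine local solutions via CRT over a finite set of primes. -/
lemma crt_combine (d b : ℤ) (f g : ℕ → ℕ) (s : Finset ℕ)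
    (hs : ∀ p ∈ s, p.Prime) (hgf : ∀ p ∈ s, g p ≤ f p)
    (hex : ∀ p ∈ s, ∃ y : ℤ, (p:ℤ)^(f p) ∣ y^2 - d ∧ (p:ℤ)^(g p) ∣ y - b) :
    ∃ y : ℤ, ∀ p ∈ s, (p:ℤ)^(f p) ∣ y^2 - d ∧ (p:ℤ)^(g p) ∣ y - b := by
  classical
  revert hs hgf hex
  refine Finset.induction_on s ?_ ?_
  · intro _ _ _; exact ⟨0, by simp⟩
  · intro q t hq ih hs hgf hex
    obtain ⟨y₁, hy₁, hy₁b⟩ := hex q (Finset.mem_insert_self q t)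
    obtain ⟨y₂, hy₂⟩ := ih (fun p hp => hs p (Finset.mem_insert_of_mem hp))
      (fun p hp => hgf p (Finset.mem_insert_of_mem hp))
      (fun p hp => hex p (Finset.mem_insert_of_mem hp))
    set M := ∏ r ∈ t, (r:ℤ)^(f r) with hM
    have hcop : IsCoprime ((q:ℤ)^(f q)) M := by
      apply IsCoprime.prod_right
      intro r hr
      have hqr : q ≠ r := by rintro rfl; exact hq hr
      have hbase : IsCoprime ((q:ℤ)) ((r:ℤ)) := by
        rw [Int.isCoprime_iff_gcd_eq_one]
        have : Nat.Coprime q r := (Nat.coprime_primes (hs q (Finset.mem_insert_self q t))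
          (hs r (Finset.mem_insert_of_mem hr))).mpr hqr
        simpa [Int.gcd_natCast_natCast] using this
      exact hbase.pow
    obtain ⟨u, v, huv⟩ := hcop
    set Y := y₂ * (u * (q:ℤ)^(f q)) + y₁ * (v * M) with hY
    have c₁ : (q:ℤ)^(f q) ∣ Y - y₁ := ⟨(y₂ - y₁)*u, by rw [hY]; linear_combination y₁ * huv⟩
    have c₂ : M ∣ Y - y₂ := ⟨(y₁ - y₂)*v, by rw [hY]; linear_combination y₂ * huv⟩
    have key : ∀ (k y₀ : ℤ), k ∣ Y - y₀ → k ∣ y₀^2 - d → k ∣ Y^2 - d := by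
      intro k y₀ h1 h2
      have e : Y^2 - d = (Y - y₀)*(Y + y₀) + (y₀^2 - d) := by ring
      rw [e]; exact dvd_add (h1.mul_right _) h2
    have keyb : ∀ (k y₀ : ℤ), k ∣ Y - y₀ → k ∣ y₀ - b → k ∣ Y - b := by
      intro k y₀ h1 h2
      have e : Y - b = (Y - y₀) + (y₀ - b) := by ring
      rw [e]; exact dvd_add h1 h2
    refine ⟨Y, ?_⟩
    intro p hp
    rcases Finset.mem_insert.mp hp with rfl | hp'
    · exact ⟨key _ y₁ c₁ hy₁,
        keyb _ y₁ ((pow_dvd_pow _ (hgf p hp)).trans c₁) hy₁b⟩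
    · have hM' : (p:ℤ)^(f p) ∣ M := Finset.dvd_prod_of_mem _ hp'
      have h1 : (p:ℤ)^(f p) ∣ Y - y₂ := hM'.trans c₂
      exact ⟨key _ y₂ h1 (hy₂ p hp').1,
        keyb _ y₂ ((pow_dvd_pow _ (hgf p hp)).trans h1) (hy₂ p hp').2⟩

/-- From prime-power divisibility for all prime factors, get divisibility by `N`. -/
lemma dvd_of_prime_pow_dvd {N : ℕ} (hN : N ≠ 0) {z : ℤ}
    (h : ∀ p ∈ N.primeFactors, (p:ℤ)^(N.factorization p) ∣ z) : (N:ℤ) ∣ z := by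
  have e : (N:ℤ) = ∏ p ∈ N.primeFactors, (p:ℤ)^(N.factorization p) := by
    conv_lhs => rw [← Nat.factorization_prod_pow_eq_self hN]
    rw [Finsupp.prod]
    push_cast
    rfl
  rw [e]
  refine Finset.prod_dvd_of_coprime ?_ h
  intro p hp q hq hne
  have hpp := Nat.prime_of_mem_primeFactors (by exact_mod_cast hp)
  have hqq := Nat.prime_of_mem_primeFactors (by exact_mod_cast hq)
  have hbase : IsCoprime ((p:ℤ)) ((q:ℤ)) := by
    rw [Int.isCoprime_iff_gcd_eq_one]
    have : Nat.Coprime p q := (Nat.coprime_primes hpp hqq).mpr (by exact_mod_cast hne)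
    simpa [Int.gcd_natCast_natCast] using this
  exact hbase.pow

/-- Completing the square: solvability of the congruence in terms of square roots of the
discriminant. -/
lemma exists_root_iff (a b c n : ℤ) (ha : a ≠ 0) :
    (∃ x : ℤ, n ∣ a*x^2 + b*x + c) ↔
      (∃ y : ℤ, (4*a*n) ∣ y^2 - (b^2 - 4*a*c) ∧ (2*a) ∣ y - b) := by
  constructor
  · rintro ⟨x, hx⟩
    refine ⟨2*a*x + b, ?_, ⟨x, by ring⟩⟩
    have e : (2*a*x+b)^2 - (b^2-4*a*c) = (4*a)*(a*x^2+b*x+c) := by ring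
    rw [e]
    exact mul_dvd_mul_left (4*a) hx
  · rintro ⟨y, h1, h2⟩
    obtain ⟨x, hx⟩ := h2
    refine ⟨x, ?_⟩
    have e : y^2 - (b^2-4*a*c) = (4*a)*(a*x^2+b*x+c) := by
      have hy : y = 2*a*x + b := by linarith
      rw [hy]; ring
    rw [e] at h1
    have h4a : (4*a:ℤ) ≠ 0 := by simp [ha]
    exact (mul_dvd_mul_iff_left h4a).mp h1

theorem no_solutions_iff' (a b c n : ℤ) (ha : a ≠ 0) (hn : 2 ≤ n) :
    (∃ x : ℤ, n ∣ a * x ^ 2 + b * x + c) ↔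
      (IsQR (4 * a * n) (b ^ 2 - 4 * a * c) ∧
        ¬ ∃ p : ℕ, p.Prime ∧ (p : ℤ) ∣ 2 * a ∧
          1 < padicValInt p (2 * a) ∧
          padicValInt p (2 * a) < padicValInt p (4 * a * n) ∧
          (p : ℤ) ∣ b ∧ (p : ℤ) ^ 2 ∣ b ^ 2 - 4 * a * c ∧
          Obstruction p (padicValInt p (4 * a * n)) (padicValInt p (2 * a)) b
            (b ^ 2 - 4 * a * c)) := by
  rw [exists_root_iff a b c n ha]
  constructor
  · rintro ⟨y, hy1, hy2⟩
    refine ⟨⟨y, hy1⟩, ?_⟩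
    rintro ⟨p, hpp, hpa, h1, h2, hpb, hp2d, hobs⟩
    haveI : Fact p.Prime := ⟨hpp⟩
    exact no_obstruction_of_root (le_of_lt h2)
      ((padicValInt_dvd _).trans hy1) ((padicValInt_dvd _).trans hy2) hobs
  · rintro ⟨⟨y₀, hy₀⟩, hno⟩
    set d := b^2 - 4*a*c with hd
    have h4an : (4*a*n : ℤ) ≠ 0 := by
      intro h
      rcases mul_eq_zero.mp h with h' | h'
      · rcases mul_eq_zero.mp h' with h'' | h''
        · norm_num at h''
        · exact ha h''
      · omega
    have ha2 : (2*a : ℤ) ≠ 0 := by simp [ha]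
    set N := (4*a*n).natAbs with hN'
    set A := (2*a).natAbs with hA'
    have hN : N ≠ 0 := Int.natAbs_ne_zero.mpr h4an
    have hA : A ≠ 0 := Int.natAbs_ne_zero.mpr ha2
    have hAN : A ∣ N := Int.natAbs_dvd_natAbs.mpr ⟨2*n, by ring⟩
    have hfactN : ∀ p : ℕ, p.Prime → N.factorization p = padicValInt p (4*a*n) := by
      intro p hp; rw [Nat.factorization_def _ hp]; rfl
    have hfactA : ∀ p : ℕ, p.Prime → A.factorization p = padicValInt p (2*a) := by
      intro p hp; rw [Nat.factorization_def _ hp]; rfl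
    have hgf : ∀ p ∈ N.primeFactors, A.factorization p ≤ N.factorization p := by
      intro p _
      exact (Nat.factorization_le_iff_dvd hA hN).mpr hAN p
    have hex : ∀ p ∈ N.primeFactors,
        ∃ y : ℤ, (p:ℤ)^(N.factorization p) ∣ y^2 - d ∧ (p:ℤ)^(A.factorization p) ∣ y - b := by
      intro p hp
      have hpp : p.Prime := Nat.prime_of_mem_primeFactors hp
      haveI : Fact p.Prime := ⟨hpp⟩
      rw [hfactN p hpp, hfactA p hpp]
      by_cases hpa : (p:ℤ) ∣ 2*a
      · exact local_lift a b c n ha hn hpa ⟨y₀, (padicValInt_dvd _).trans hy₀⟩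
          (fun h => hno ⟨p, hpp, hpa, h⟩)
      · refine ⟨y₀, (padicValInt_dvd _).trans hy₀, ?_⟩
        rw [padicValInt.eq_zero_of_not_dvd hpa, pow_zero]
        exact one_dvd _
    obtain ⟨y, hy⟩ := crt_combine d b _ _ N.primeFactors
      (fun p hp => Nat.prime_of_mem_primeFactors hp) hgf hex
    refine ⟨y, ?_, ?_⟩
    · have := dvd_of_prime_pow_dvd hN (fun p hp => (hy p hp).1)
      exact (Int.natAbs_dvd).mp this
    · have hsub : A.primeFactors ⊆ N.primeFactors := Nat.primeFactors_mono hAN hN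
      have := dvd_of_prime_pow_dvd hA (fun p hp => (hy p (hsub hp)).2)
      exact (Int.natAbs_dvd).mp this

/-- Paper's Proposition 3.3. -/
theorem no_solutions_iff (a b c n : ℤ) (ha : a ≠ 0) (hn : 2 ≤ n) :
    (¬ ∃ x : ℤ, n ∣ a * x ^ 2 + b * x + c) ↔
      (¬ IsQR (4 * a * n) (b ^ 2 - 4 * a * c)) ∨
      (IsQR (4 * a * n) (b ^ 2 - 4 * a * c) ∧
        ∃ p : ℕ, p.Prime ∧ (p : ℤ) ∣ 2 * a ∧
          1 < padicValInt p (2 * a) ∧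
          padicValInt p (2 * a) < padicValInt p (4 * a * n) ∧
          (p : ℤ) ∣ b ∧ (p : ℤ) ^ 2 ∣ b ^ 2 - 4 * a * c ∧
          Obstruction p (padicValInt p (4 * a * n)) (padicValInt p (2 * a)) b
            (b ^ 2 - 4 * a * c)) := by
  have h := no_solutions_iff' a b c n ha hn
  constructor
  · intro hne
    by_cases hQR : IsQR (4 * a * n) (b ^ 2 - 4 * a * c)
    · right
      refine ⟨hQR, ?_⟩
      by_contra hno
      exact hne (h.mpr ⟨hQR, hno⟩)
    · left; exact hQR
  · rintro (hnQR | ⟨hQR, hob⟩) hex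
    · exact hnQR (h.mp hex).1
    · exact (h.mp hex).2 hob
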